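/- Every fully faithful and essentially surjective functor F : Γ → Ω between groupoids factors as F = H ∘ G, where G : Γ → Λ is an equivalence of groupoids admitting a strict retraction and H : Λ → Ω is a fully faithful functor which is surjective on objects. Here Λ is the groupoid with objects Λ₀ = {(γ, f) : γ ∈ Γ₀, f a morphism of Ω with source F(γ)} and morphisms Λ₁ = Λ₀ ×_{Ω₀} Ω₁ ×_{Ω₀} Λ₀. -/

import Mathlib

open CategoryTheory Function

variable {Γ Ω : Type*} [Groupoid Γ] [Groupoid Ω]

/-- The intermediate groupoid `Λ` of the factorization: objects are pairs `(γ, f)`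
with `γ` an object of `Γ` and `f` a morphism of `Ω` with source `F γ`; morphisms
`(γ, f) → (γ', f')` are morphisms `target f → target f'` of `Ω`, so that
`Λ₁ = Λ₀ ×_{Ω₀} Ω₁ ×_{Ω₀} Λ₀`. -/
structure FactGrpd (F : Γ ⥤ Ω) where
  pt : Γ
  tgt : Ω
  arr : F.obj pt ⟶ tgt

instance (F : Γ ⥤ Ω) : Groupoid (FactGrpd F) where
  Hom a b := a.tgt ⟶ b.tgt
  id a := 𝟙 a.tgt
  comp f g := f ≫ g
  inv f := Groupoid.inv f
  id_comp := by intros; simp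
  comp_id := by intros; simp
  assoc := by intros; simp
  inv_comp := by intros; exact Groupoid.inv_comp _
  comp_inv := by intros; exact Groupoid.comp_inv _

/-- The first factor `G : Γ ⥤ Λ`, `γ ↦ (γ, id_{F γ})`. -/
def factG (F : Γ ⥤ Ω) : Γ ⥤ FactGrpd F where
  obj γ := ⟨γ, F.obj γ, 𝟙 (F.obj γ)⟩
  map f := F.map f
  map_id := by intros; exact F.map_id _
  map_comp := by intros; exact F.map_comp _ _

/-- The second factor `H : Λ ⥤ Ω`, `(γ, f) ↦ target f`. -/
def factH (F : Γ ⥤ Ω) : FactGrpd F ⥤ Ω where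
  obj a := a.tgt
  map f := f
  map_id := by intros; rfl
  map_comp := by intros; rfl

/-- Every fully faithful and essentially surjective functor `F : Γ ⥤ Ω` between
groupoids factors as `F = G ⋙ H` where `H` is fully faithful and surjective on
objects, and `G` is an equivalence admitting a strict retraction (a functor `P` with
`G ⋙ P = 𝟭 Γ`). -/
theorem factorization_of_weak_equivalence (F : Γ ⥤ Ω)
    (hfull : F.Full) (hfaithful : F.Faithful) (hes : F.EssSurj) :
    factG F ⋙ factH F = F ∧
      (factH F).Full ∧ (factH F).Faithful ∧ Surjective (factH F).obj ∧
      (factG F).IsEquivalence ∧ ∃ P : FactGrpd F ⥤ Γ, factG F ⋙ P = 𝟭 Γ := by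
  refine ⟨rfl, ⟨fun {a b} f => ⟨f, rfl⟩⟩, ⟨fun h => h⟩, ?_, ?_, ?_⟩
  · intro ω
    obtain ⟨γ, ⟨e⟩⟩ := hes.mem_essImage ω
    exact ⟨⟨γ, ω, e.hom⟩, rfl⟩
  · have hfF : (factG F).Full := ⟨fun {a b} f => (hfull.map_surjective f)⟩
    have hffF : (factG F).Faithful := ⟨fun {a b} f g h => hfaithful.map_injective h⟩
    have hesF : (factG F).EssSurj := by
      constructor
      intro a
      refine ⟨a.pt, ⟨⟨(a.arr : (factG F).obj a.pt ⟶ a),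
        (Groupoid.inv a.arr : a ⟶ (factG F).obj a.pt), ?_, ?_⟩⟩⟩
      · exact Groupoid.comp_inv a.arr
      · exact Groupoid.inv_comp a.arr
    exact { }
  · haveI := hfull
    refine ⟨{ obj := fun a => a.pt,
              map := fun {a b} f => F.preimage (a.arr ≫ f ≫ Groupoid.inv b.arr),
              map_id := ?_, map_comp := ?_ }, ?_⟩
    · intro a
      apply hfaithful.map_injective
      rw [F.map_preimage]
      show a.arr ≫ 𝟙 a.tgt ≫ Groupoid.inv a.arr = F.map (𝟙 a.pt)
      simp
    · intro a b c f g
      apply hfaithful.map_injective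
      rw [F.map_comp, F.map_preimage, F.map_preimage, F.map_preimage]
      show a.arr ≫ (f ≫ g) ≫ Groupoid.inv c.arr =
        (a.arr ≫ f ≫ Groupoid.inv b.arr) ≫ b.arr ≫ g ≫ Groupoid.inv c.arr
      simp
    · refine CategoryTheory.Functor.ext (fun γ => rfl) (fun γ γ' f => ?_)
      simp only [eqToHom_refl, Category.comp_id, Category.id_comp, Functor.id_map]
      apply hfaithful.map_injective
      show F.map (F.preimage (𝟙 (F.obj γ) ≫ F.map f ≫ Groupoid.inv (𝟙 (F.obj γ')))) = F.map (𝟙 γ ≫ f ≫ 𝟙 γ')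
      rw [F.map_preimage]
      simp
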